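/- Let m ≥ 2 and let u ≠ v be indices in {1,…,m} such that the u-th and v-th rows of L_X are zero (u and v are isolated vertices of X). Then perfect state transfer occurs between u and v with respect to the join Laplacian L if and only if m = 2 and n ≡ 2 (mod 4). -/

import Mathlib

open Matrix Complex

/-- Transition matrix `exp(itM)` of the continuous quantum walk whose Hamiltonian is the
real symmetric matrix `M` (the matrix exponential is taken over `ℂ`). -/
noncomputable def transU {N : Type*} [Fintype N] [DecidableEq N]
    (M : Matrix N N ℝ) (t : ℝ) : Matrix N N ℂ :=
  NormedSpace.exp ((Complex.I * (t : ℂ)) • M.map (fun x : ℝ => (x : ℂ)))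

/-- Laplacian matrix of the join `X ∨ Y` of two weighted graphs with Laplacian
matrices `LX` and `LY`. -/
noncomputable def joinL (m n : ℕ) (LX : Matrix (Fin m) (Fin m) ℝ)
    (LY : Matrix (Fin n) (Fin n) ℝ) :
    Matrix (Fin m ⊕ Fin n) (Fin m ⊕ Fin n) ℝ :=
  Matrix.fromBlocks (LX + (n : ℝ) • (1 : Matrix (Fin m) (Fin m) ℝ))
    (-(Matrix.of fun _ _ => (1 : ℝ)))
    (-(Matrix.of fun _ _ => (1 : ℝ)))
    (LY + (m : ℝ) • (1 : Matrix (Fin n) (Fin n) ℝ))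

/-- Adjacency matrix of the join `X ∨ Y` of two weighted graphs with adjacency
matrices `AX` and `AY`. -/
noncomputable def joinA (m n : ℕ) (AX : Matrix (Fin m) (Fin m) ℝ)
    (AY : Matrix (Fin n) (Fin n) ℝ) :
    Matrix (Fin m ⊕ Fin n) (Fin m ⊕ Fin n) ℝ :=
  Matrix.fromBlocks AX (Matrix.of fun _ _ => (1 : ℝ))
    (Matrix.of fun _ _ => (1 : ℝ)) AY

/-- `lam` is an eigenvalue of the matrix `M`. -/
def IsEigenvalue {N : Type*} [Fintype N] (M : Matrix N N ℝ) (lam : ℝ) : Prop :=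
  ∃ w : N → ℝ, w ≠ 0 ∧ M.mulVec w = lam • w

/-- The eigenvalue support `σ_u(M)` of the vertex `u`: all eigenvalues `lam` of `M` having
an eigenvector `w` with `w u ≠ 0`. -/
def eigSupport {N : Type*} [Fintype N] (M : Matrix N N ℝ) (u : N) : Set ℝ :=
  {lam | ∃ w : N → ℝ, w ≠ 0 ∧ M.mulVec w = lam • w ∧ w u ≠ 0}

/-- Vertices `u` and `v` are strongly cospectral with respect to `M`: for each eigenvalue,
either all eigenvectors have equal `u`,`v` entries, or all have opposite `u`,`v` entries. -/
def StronglyCospectral {N : Type*} [Fintype N] (M : Matrix N N ℝ) (u v : N) : Prop :=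
  ∀ lam : ℝ, IsEigenvalue M lam →
    (∀ w : N → ℝ, M.mulVec w = lam • w → w u = w v) ∨
    (∀ w : N → ℝ, M.mulVec w = lam • w → w u = -(w v))

/-- `σ_{uv}^-(M)`: eigenvalues in the support of `u` all of whose eigenvectors `w`
satisfy `w u = - w v`. -/
def sigmaMinus {N : Type*} [Fintype N] (M : Matrix N N ℝ) (u v : N) : Set ℝ :=
  {lam | lam ∈ eigSupport M u ∧ ∀ w : N → ℝ, M.mulVec w = lam • w → w u = -(w v)}

/-- The vertex `u` is periodic with respect to `M`. -/
noncomputable def PeriodicAt {N : Type*} [Fintype N] [DecidableEq N]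
    (M : Matrix N N ℝ) (u : N) : Prop :=
  ∃ τ : ℝ, 0 < τ ∧ ‖transU M τ u u‖ = 1

/-- Perfect state transfer occurs between vertices `u` and `v` with respect to `M`. -/
noncomputable def HasPST {N : Type*} [Fintype N] [DecidableEq N]
    (M : Matrix N N ℝ) (u v : N) : Prop :=
  ∃ τ : ℝ, 0 < τ ∧ ‖transU M τ u v‖ = 1
lemma pow_mulVec_eigen {N : Type*} [Fintype N] [DecidableEq N] (M : Matrix N N ℂ)
    (x : N → ℂ) (μ : ℂ) (h : M.mulVec x = μ • x) (k : ℕ) :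
    (M ^ k).mulVec x = μ ^ k • x := by
  induction k with
  | zero => simp
  | succ k ih =>
      rw [pow_succ, ← Matrix.mulVec_mulVec, h, Matrix.mulVec_smul, ih]
      module

lemma exp_mulVec_eigen {N : Type*} [Fintype N] [DecidableEq N] (M : Matrix N N ℂ)
    (x : N → ℂ) (μ : ℂ) (h : M.mulVec x = μ • x) :
    (NormedSpace.exp M).mulVec x = Complex.exp μ • x := by
  letI : SeminormedRing (Matrix N N ℂ) := Matrix.linftyOpSemiNormedRing
  letI : NormedRing (Matrix N N ℂ) := Matrix.linftyOpNormedRing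
  letI : NormedAlgebra ℂ (Matrix N N ℂ) := Matrix.linftyOpNormedAlgebra
  let T : Matrix N N ℂ →ₗ[ℂ] (N → ℂ) :=
    { toFun := fun A => A.mulVec x
      map_add' := fun A B => Matrix.add_mulVec A B x
      map_smul' := fun c A => Matrix.smul_mulVec c A x }
  have hs : Summable fun k : ℕ => ((Nat.factorial k : ℂ))⁻¹ • M ^ k :=
    NormedSpace.expSeries_summable' (𝕂 := ℂ) M
  have hmap : (NormedSpace.exp M).mulVec x
      = ∑' k : ℕ, (((Nat.factorial k : ℂ))⁻¹ • M ^ k).mulVec x := by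
    rw [NormedSpace.exp_eq_tsum (𝕂 := ℂ)]
    exact (T.toContinuousLinearMap.map_tsum hs)
  rw [hmap]
  have : ∀ k : ℕ, (((Nat.factorial k : ℂ))⁻¹ • M ^ k).mulVec x
      = (((Nat.factorial k : ℂ))⁻¹ * μ ^ k) • x := by
    intro k
    rw [Matrix.smul_mulVec, pow_mulVec_eigen M x μ h k, smul_smul]
  simp_rw [this]
  rw [Summable.tsum_smul_const ?_]
  · congr 1
    rw [Complex.exp_eq_exp_ℂ, NormedSpace.exp_eq_tsum (𝕂 := ℂ)]
    simp [smul_eq_mul]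
  · simpa [smul_eq_mul] using NormedSpace.expSeries_summable' (𝕂 := ℂ) μ


lemma tri_eq' (a b c cθ sθ cφ sφ : ℝ) (ha : 0 < a) (hb : 0 < b) (hc : 0 < c)
    (habc : a + b + c = 1) (pyθ : sθ^2 + cθ^2 = 1) (pyφ : sφ^2 + cφ^2 = 1)
    (h : (a + cθ*b - cφ*c)^2 + (sθ*b - sφ*c)^2 = 1) : cθ = 1 ∧ cφ = -1 := by
  have h3 : 0 ≤ 1 + (cθ*cφ + sθ*sφ) := by
    nlinarith [sq_nonneg (cθ*sφ - sθ*cφ), sq_nonneg (1 + cθ*cφ + sθ*sφ)]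
  have h1 : 0 ≤ 1 - cθ := by nlinarith [sq_nonneg (cθ - 1), sq_nonneg sθ]
  have h2 : 0 ≤ 1 + cφ := by nlinarith [sq_nonneg (cφ + 1), sq_nonneg sφ]
  have hE : 2*a*b*(1-cθ) + 2*a*c*(1+cφ) + 2*b*c*(1 + (cθ*cφ + sθ*sφ)) = 0 := by
    linear_combination (a+b+c+1)*habc - h + b^2*pyθ + c^2*pyφ
  have hab : 0 < a*b := mul_pos ha hb
  have hac : 0 < a*c := mul_pos ha hc
  have hbc : 0 < b*c := mul_pos hb hc
  constructor
  · nlinarith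
  · nlinarith

lemma int_aux (N k l : ℤ) (h : N*(2*k) - (2+N)*(2*l) - (2+N) = 0) : N % 4 = 2 := by
  have h1 : N = 2*(N*k - 2*l - N*l - 1) := by linear_combination -h
  set r : ℤ := N*k - 2*l - N*l - 1 with hr
  have h2 : r = 2*(r*k - l - r*l) - 1 := by
    have hrEq : r = N*k - 2*l - N*l - 1 := hr
    linear_combination hrEq + (k - l)*h1
  have h3 : N = 4*(r*k - l - r*l) - 2 := by linear_combination h1 + 2*h2
  generalize (r*k - l - r*l) = s at h3
  omega

lemma formula (m n : ℕ) (hm : 2 ≤ m) (hn : 1 ≤ n)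
    (LX : Matrix (Fin m) (Fin m) ℝ) (LY : Matrix (Fin n) (Fin n) ℝ)
    (hLXsymm : LX.IsSymm) (hLXrow : ∀ i, ∑ j, LX i j = 0)
    (hLYrow : ∀ i, ∑ j, LY i j = 0)
    (u v : Fin m) (huv : u ≠ v)
    (hu : ∀ j, LX u j = 0) (hv : ∀ j, LX v j = 0) (t : ℝ) :
    transU (joinL m n LX LY) t (Sum.inl u) (Sum.inl v)
      = Complex.ofReal (1/(m+n))
        + Complex.exp (((t*(m+n) : ℝ)) * I) * Complex.ofReal (n/(m*(m+n)))
        - Complex.exp (((t*n : ℝ)) * I) * Complex.ofReal (1/(m : ℝ)) := by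
  have hm0 : (0:ℝ) < m := by positivity
  have hmn0 : (0:ℝ) < (m:ℝ)+n := by positivity
  have hmC : (m:ℂ) ≠ 0 := by exact_mod_cast hm0.ne'
  have hmnC : (m:ℂ)+(n:ℂ) ≠ 0 := by exact_mod_cast hmn0.ne'
  set Mc : Matrix (Fin m ⊕ Fin n) (Fin m ⊕ Fin n) ℂ :=
    (joinL m n LX LY).map (fun x : ℝ => (x : ℂ)) with hMcdef
  have hMc11 : ∀ i j, Mc (Sum.inl i) (Sum.inl j)
      = (LX i j : ℂ) + (n:ℂ) * (if i = j then 1 else 0) := by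
    intro i j
    simp [hMcdef, joinL, Matrix.map_apply, Matrix.one_apply]
    split <;> simp
  have hMc12 : ∀ i j, Mc (Sum.inl i) (Sum.inr j) = -1 := by
    intro i j; simp [hMcdef, joinL, Matrix.map_apply]
  have hMc21 : ∀ i j, Mc (Sum.inr i) (Sum.inl j) = -1 := by
    intro i j; simp [hMcdef, joinL, Matrix.map_apply]
  have hMc22 : ∀ i j, Mc (Sum.inr i) (Sum.inr j)
      = (LY i j : ℂ) + (m:ℂ) * (if i = j then 1 else 0) := by
    intro i j
    simp [hMcdef, joinL, Matrix.map_apply, Matrix.one_apply]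
    split <;> simp
  have hmv : ∀ (x : (Fin m ⊕ Fin n) → ℂ) (a : Fin m ⊕ Fin n),
      Mc.mulVec x a = (∑ j : Fin m, Mc a (Sum.inl j) * x (Sum.inl j))
        + ∑ j : Fin n, Mc a (Sum.inr j) * x (Sum.inr j) := by
    intro x a
    simp [Matrix.mulVec, dotProduct, Fintype.sum_sum_type]
  have hrowX : ∀ i, ∑ j, (LX i j : ℂ) = 0 := by
    intro i; rw [← Complex.ofReal_sum, hLXrow i, Complex.ofReal_zero]
  have hrowY : ∀ i, ∑ j, (LY i j : ℂ) = 0 := by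
    intro i; rw [← Complex.ofReal_sum, hLYrow i, Complex.ofReal_zero]
  have hXu : ∀ j, (LX j u : ℂ) = 0 := by
    intro j; rw [hLXsymm.apply]; exact_mod_cast hu j
  have hXv : ∀ j, (LX j v : ℂ) = 0 := by
    intro j; rw [hLXsymm.apply]; exact_mod_cast hv j
  -- the four eigenvectors
  set x0 : (Fin m ⊕ Fin n) → ℂ := fun _ => 1 with hx0def
  set x1 : (Fin m ⊕ Fin n) → ℂ := Sum.elim (fun _ => (n:ℂ)) (fun _ => -(m:ℂ)) with hx1def
  set x2 : (Fin m ⊕ Fin n) → ℂ :=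
    Sum.elim (fun i => (if i = u then 1 else 0) + (if i = v then 1 else 0) - 2/(m:ℂ))
      (fun _ => 0) with hx2def
  set x3 : (Fin m ⊕ Fin n) → ℂ :=
    Sum.elim (fun i => (if i = u then 1 else 0) - (if i = v then 1 else 0))
      (fun _ => 0) with hx3def
  have hsum_ite : ∀ w : Fin m, ∑ j : Fin m, (if j = w then (1:ℂ) else 0) = 1 := by
    intro w; simp
  have h0 : Mc.mulVec x0 = (0:ℂ) • x0 := by
    funext a
    rw [hmv]
    cases a with
    | inl i =>
        simp only [hx0def, hMc11, hMc12, mul_one]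
        rw [Finset.sum_add_distrib, hrowX i, ← Finset.mul_sum]
        simp
    | inr i =>
        simp only [hx0def, hMc21, hMc22, mul_one]
        rw [Finset.sum_add_distrib, hrowY i, ← Finset.mul_sum]
        simp
  have hsplitX : ∀ (i : Fin m) (g : Fin m → ℂ),
      ∑ j : Fin m, ((LX i j : ℂ) + (n:ℂ) * (if i = j then 1 else 0)) * g j
        = (∑ j : Fin m, (LX i j : ℂ) * g j) + (n:ℂ) * g i := by
    intro i g
    have h : ∀ j, ((LX i j : ℂ) + (n:ℂ) * (if i = j then 1 else 0)) * g j
        = (LX i j:ℂ) * g j + (n:ℂ) * (if i = j then g j else 0) := by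
      intro j; by_cases h : i = j <;> simp [h] <;> ring
    simp_rw [h]
    rw [Finset.sum_add_distrib, ← Finset.mul_sum, Finset.sum_ite_eq]
    simp
  have hsplitY : ∀ (i : Fin n) (g : Fin n → ℂ),
      ∑ j : Fin n, ((LY i j : ℂ) + (m:ℂ) * (if i = j then 1 else 0)) * g j
        = (∑ j : Fin n, (LY i j : ℂ) * g j) + (m:ℂ) * g i := by
    intro i g
    have h : ∀ j, ((LY i j : ℂ) + (m:ℂ) * (if i = j then 1 else 0)) * g j
        = (LY i j:ℂ) * g j + (m:ℂ) * (if i = j then g j else 0) := by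
      intro j; by_cases h : i = j <;> simp [h] <;> ring
    simp_rw [h]
    rw [Finset.sum_add_distrib, ← Finset.mul_sum, Finset.sum_ite_eq]
    simp
  have h1 : Mc.mulVec x1 = ((m:ℂ)+n) • x1 := by
    funext a
    rw [hmv]
    cases a with
    | inl i =>
        simp only [hx1def, hMc11, hMc12, Sum.elim_inl, Sum.elim_inr, Pi.smul_apply,
          smul_eq_mul]
        rw [hsplitX i (fun _ => (n:ℂ))]
        have e1 : ∑ j : Fin m, (LX i j:ℂ) * (n:ℂ) = 0 := by
          rw [← Finset.sum_mul, hrowX i, zero_mul]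
        rw [e1]
        simp [Finset.sum_const, Finset.card_univ]
        ring
    | inr i =>
        simp only [hx1def, hMc21, hMc22, Sum.elim_inl, Sum.elim_inr, Pi.smul_apply,
          smul_eq_mul]
        rw [hsplitY i (fun _ => -(m:ℂ))]
        have e1 : ∑ j : Fin n, (LY i j:ℂ) * -(m:ℂ) = 0 := by
          rw [← Finset.sum_mul, hrowY i, zero_mul]
        rw [e1]
        simp [Finset.sum_const, Finset.card_univ]
        ring
  have h2 : Mc.mulVec x2 = (n:ℂ) • x2 := by
    funext a
    rw [hmv]
    cases a with
    | inl i =>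
        simp only [hx2def, hMc11, hMc12, Sum.elim_inl, Sum.elim_inr, Pi.smul_apply,
          smul_eq_mul]
        rw [hsplitX i (fun j => ((if j = u then (1:ℂ) else 0) + if j = v then 1 else 0)
          - 2/(m:ℂ))]
        have e1 : ∑ j : Fin m, (LX i j:ℂ) *
            (((if j = u then (1:ℂ) else 0) + if j = v then 1 else 0) - 2/(m:ℂ)) = 0 := by
          have h : ∀ j : Fin m, (LX i j:ℂ) *
              (((if j = u then (1:ℂ) else 0) + if j = v then 1 else 0) - 2/(m:ℂ))
              = (LX i j:ℂ) * -(2/(m:ℂ)) := by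
            intro j
            by_cases h1 : j = u
            · subst h1; simp [hXu i]
            · by_cases h2 : j = v
              · subst h2; simp [hXv i]
              · simp only [h1, h2, if_false]; ring
          simp_rw [h]
          rw [← Finset.sum_mul, hrowX i, zero_mul]
        rw [e1]
        simp
        try ring
    | inr i =>
        simp only [hx2def, hMc21, hMc22, Sum.elim_inl, Sum.elim_inr, Pi.smul_apply,
          smul_eq_mul]
        have e1 : ∑ j : Fin m, (-1:ℂ) *
            (((if j = u then (1:ℂ) else 0) + if j = v then 1 else 0) - 2/(m:ℂ)) = 0 := by
          have h : ∀ j : Fin m, (-1:ℂ) *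
              (((if j = u then (1:ℂ) else 0) + if j = v then 1 else 0) - 2/(m:ℂ))
              = 2/(m:ℂ) - (if j = u then (1:ℂ) else 0) - (if j = v then (1:ℂ) else 0) := by
            intro j; ring
          simp_rw [h]
          rw [Finset.sum_sub_distrib, Finset.sum_sub_distrib, Finset.sum_const,
            Finset.card_univ]
          simp only [Fintype.card_fin, nsmul_eq_mul, hsum_ite]
          field_simp
          try norm_num
        rw [e1]
        simp
  have h3 : Mc.mulVec x3 = (n:ℂ) • x3 := by
    funext a
    rw [hmv]
    cases a with
    | inl i =>
        simp only [hx3def, hMc11, hMc12, Sum.elim_inl, Sum.elim_inr, Pi.smul_apply,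
          smul_eq_mul]
        rw [hsplitX i (fun j => (if j = u then (1:ℂ) else 0) - if j = v then 1 else 0)]
        have e1 : ∑ j : Fin m, (LX i j:ℂ) *
            ((if j = u then (1:ℂ) else 0) - if j = v then 1 else 0) = 0 := by
          have h : ∀ j : Fin m, (LX i j:ℂ) *
              ((if j = u then (1:ℂ) else 0) - if j = v then 1 else 0) = 0 := by
            intro j
            by_cases h1 : j = u
            · subst h1; simp [hXu i]
            · by_cases h2 : j = v
              · subst h2; simp [hXv i]
              · simp [h1, h2]
          simp_rw [h]
          simp
        rw [e1]
        simp
        try ring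
    | inr i =>
        simp only [hx3def, hMc21, hMc22, Sum.elim_inl, Sum.elim_inr, Pi.smul_apply,
          smul_eq_mul]
        have e1 : ∑ j : Fin m, (-1:ℂ) *
            ((if j = u then (1:ℂ) else 0) - if j = v then 1 else 0) = 0 := by
          have h : ∀ j : Fin m, (-1:ℂ) *
              ((if j = u then (1:ℂ) else 0) - if j = v then 1 else 0)
              = (if j = v then (1:ℂ) else 0) - (if j = u then (1:ℂ) else 0) := by
            intro j; ring
          simp_rw [h]
          rw [Finset.sum_sub_distrib]
          simp [hsum_ite]
        rw [e1]
        simp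
  -- decomposition of the basis vector
  have hdec : (Pi.single (Sum.inl v) (1:ℂ))
      = (1/((m:ℂ)+n)) • x0 + (1/((m:ℂ)*((m:ℂ)+n))) • x1 + (1/2:ℂ) • x2 - (1/2:ℂ) • x3 := by
    funext a
    cases a with
    | inl i =>
        simp only [hx0def, hx1def, hx2def, hx3def, Pi.sub_apply, Pi.add_apply,
          Pi.smul_apply, smul_eq_mul, Sum.elim_inl, Pi.single_apply,
          Sum.inl.injEq]
        by_cases h1 : i = u
        · subst h1
          simp only [huv, if_false, if_true, if_pos rfl, if_neg huv]
          field_simp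
          ring
        · by_cases h2 : i = v
          · subst h2
            simp only [if_pos rfl, if_neg (Ne.symm huv)]
            field_simp
            ring
          · simp only [if_neg h1, if_neg h2]
            field_simp
            ring
    | inr j =>
        simp only [hx0def, hx1def, hx2def, hx3def, Pi.sub_apply, Pi.add_apply,
          Pi.smul_apply, smul_eq_mul, Sum.elim_inr, Pi.single_apply]
        rw [if_neg (by simp)]
        field_simp
        ring
  -- entry via mulVec
  have hentry : ∀ (A : Matrix (Fin m ⊕ Fin n) (Fin m ⊕ Fin n) ℂ),
      A (Sum.inl u) (Sum.inl v) = A.mulVec (Pi.single (Sum.inl v) 1) (Sum.inl u) := by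
    intro A
    simp [Matrix.mulVec, dotProduct, Pi.single_apply, mul_ite]
  have heig : ∀ (x : (Fin m ⊕ Fin n) → ℂ) (lam : ℂ), Mc.mulVec x = lam • x →
      (NormedSpace.exp ((Complex.I * (t:ℂ)) • Mc)).mulVec x
        = Complex.exp (Complex.I * (t:ℂ) * lam) • x := by
    intro x lam hx
    apply exp_mulVec_eigen
    rw [Matrix.smul_mulVec, hx, smul_smul]
  simp only [transU]

  rw [show (joinL m n LX LY).map (fun x : ℝ => (x:ℂ)) = Mc from rfl]
  rw [hentry (NormedSpace.exp ((Complex.I * (t:ℂ)) • Mc)), hdec, Matrix.mulVec_sub, Matrix.mulVec_add, Matrix.mulVec_add,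
    Matrix.mulVec_smul, Matrix.mulVec_smul, Matrix.mulVec_smul, Matrix.mulVec_smul,
    heig x0 0 h0, heig x1 ((m:ℂ)+n) h1, heig x2 (n:ℂ) h2, heig x3 (n:ℂ) h3]
  have ha : (Complex.I*(t:ℂ))*((m:ℂ)+n) = (((t*((m:ℕ)+(n:ℕ)) : ℝ)):ℂ)*Complex.I := by
    push_cast; ring
  have hb : (Complex.I*(t:ℂ))*(n:ℂ) = (((t*(n:ℕ) : ℝ)):ℂ)*Complex.I := by
    push_cast; ring
  simp only [Pi.add_apply, Pi.sub_apply, Pi.smul_apply, smul_eq_mul, hx0def, hx1def,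
    hx2def, hx3def, Sum.elim_inl, mul_zero, Complex.exp_zero, huv, if_pos rfl,
    if_neg huv, if_false, if_true, ha, hb]
  push_cast
  field_simp
  ring

theorem stmt16 (m n : ℕ) (hm : 2 ≤ m) (hn : 1 ≤ n)
    (LX : Matrix (Fin m) (Fin m) ℝ) (LY : Matrix (Fin n) (Fin n) ℝ)
    (hLXsymm : LX.IsSymm) (hLXrow : ∀ i, ∑ j, LX i j = 0)
    (hLXoffdiag : ∀ i j, i ≠ j → LX i j ≤ 0)
    (hLYsymm : LY.IsSymm) (hLYrow : ∀ i, ∑ j, LY i j = 0)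
    (hLYoffdiag : ∀ i j, i ≠ j → LY i j ≤ 0)
    (u v : Fin m) (huv : u ≠ v)
    (hu : ∀ j, LX u j = 0) (hv : ∀ j, LX v j = 0) :
    HasPST (joinL m n LX LY) (Sum.inl u) (Sum.inl v) ↔ (m = 2 ∧ n % 4 = 2) := by
  have hmR : (2:ℝ) ≤ (m:ℝ) := by exact_mod_cast hm
  have hnR : (1:ℝ) ≤ (n:ℝ) := by exact_mod_cast hn
  have hm0 : (0:ℝ) < m := by linarith
  have hn0 : (0:ℝ) < n := by linarith
  have hmn0 : (0:ℝ) < (m:ℝ)+(n:ℝ) := by linarith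
  have hexp : ∀ x : ℝ, Complex.exp ((x:ℂ) * I) = ((Real.cos x : ℝ) : ℂ) + ((Real.sin x : ℝ):ℂ) * I := by
    intro x; rw [Complex.exp_mul_I, Complex.ofReal_cos, Complex.ofReal_sin]
  constructor
  · rintro ⟨t, ht, habs⟩
    rw [formula m n hm hn LX LY hLXsymm hLXrow hLYrow u v huv hu hv t] at habs
    -- first, m = 2
    have tri : ∀ x y z : ℂ, ‖x + y - z‖ ≤
        ‖x‖ + ‖y‖ + ‖z‖ := by
      intro x y z
      have hz1 : ‖x + y - z‖ ≤ ‖x+y‖ + ‖z‖ := by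
        simpa [sub_eq_add_neg, norm_neg] using norm_add_le (x+y) (-z)
      have hz2 := norm_add_le x y
      linarith
    have hble : (1:ℝ) ≤ 2/(m:ℝ) := by
      rw [← habs]
      refine le_trans (tri _ _ _) ?_
      simp only [norm_mul, Complex.norm_real, Real.norm_eq_abs, Complex.norm_exp_ofReal_mul_I,
        one_mul]
      rw [_root_.abs_of_nonneg (by positivity : (0:ℝ) ≤ 1/((m:ℝ)+n)),
        _root_.abs_of_nonneg (by positivity : (0:ℝ) ≤ (n:ℝ)/((m:ℝ)*((m:ℝ)+(n:ℝ)))),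
        _root_.abs_of_nonneg (by positivity : (0:ℝ) ≤ 1/(m:ℝ))]
      have hsum : 1/((m:ℝ)+n) + (n:ℝ)/(m*(m+n)) + 1/(m:ℝ) = 2/(m:ℝ) := by
        field_simp
        ring
      linarith [hsum.le]
    have hm2 : m = 2 := by
      have h2 : (m:ℝ) ≤ 2 := by
        have := (one_le_div hm0).mp hble
        linarith
      have : m ≤ 2 := by exact_mod_cast h2
      omega
    subst hm2
    refine ⟨rfl, ?_⟩
    -- extract the two cosine conditions
    rw [hexp, hexp] at habs
    have habs2 := congrArg (fun x : ℝ => x^2) habs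
    simp only [one_pow] at habs2
    rw [Complex.sq_norm, Complex.normSq_apply] at habs2
    simp only [Complex.add_re, Complex.sub_re, Complex.mul_re, Complex.mul_im,
      Complex.add_im, Complex.sub_im, Complex.ofReal_re, Complex.ofReal_im,
      Complex.I_re, Complex.I_im, mul_zero, mul_one, zero_mul, sub_zero, zero_sub,
      add_zero, zero_add, neg_zero] at habs2
    have h2n0 : (0:ℝ) < (2:ℝ) + n := by linarith
    have ha : (0:ℝ) < 1/((2:ℕ):ℝ) := by norm_num
    set θ : ℝ := t * (((2:ℕ):ℝ) + (n:ℝ)) with hθdef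
    set φ : ℝ := t * (n:ℝ) with hφdef
    have hsq : ((1/(((2:ℕ):ℝ)+n)) + Real.cos θ * ((n:ℝ)/(((2:ℕ):ℝ)*(((2:ℕ):ℝ)+n)))
          - Real.cos φ * (1/((2:ℕ):ℝ)))^2
        + (Real.sin θ * ((n:ℝ)/(((2:ℕ):ℝ)*(((2:ℕ):ℝ)+n)))
          - Real.sin φ * (1/((2:ℕ):ℝ)))^2 = 1 := by
      linear_combination habs2
    have key := tri_eq' (1/(((2:ℕ):ℝ)+n)) ((n:ℝ)/(((2:ℕ):ℝ)*(((2:ℕ):ℝ)+n))) (1/((2:ℕ):ℝ))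
      (Real.cos θ) (Real.sin θ) (Real.cos φ) (Real.sin φ)
      (by push_cast; positivity) (by push_cast; positivity) (by norm_num)
      (by push_cast; field_simp; ring) (Real.sin_sq_add_cos_sq θ)
      (Real.sin_sq_add_cos_sq φ) hsq
    obtain ⟨hcθ, hcφ⟩ := key
    obtain ⟨k, hk⟩ := (Real.cos_eq_one_iff θ).mp hcθ
    have hφReal.pi : Real.cos (φ - Real.pi) = 1 := by rw [Real.cos_sub_pi, hcφ]; norm_num
    obtain ⟨l, hl⟩ := (Real.cos_eq_one_iff (φ - Real.pi)).mp hφReal.pi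
    have hθt : θ = t*(2+(n:ℝ)) := by rw [hθdef]; push_cast; ring
    have hφt : φ = t*(n:ℝ) := hφdef
    have hR : (((n:ℝ))*(2*(k:ℝ)) - (2+(n:ℝ))*(2*(l:ℝ)) - (2+(n:ℝ)))*Real.pi = 0 := by
      linear_combination (n:ℝ)*hk - (2+(n:ℝ))*hl + (n:ℝ)*hθt - (2+(n:ℝ))*hφt
    have hZ : (n:ℤ)*(2*k) - (2+(n:ℤ))*(2*l) - (2+(n:ℤ)) = 0 := by
      rcases mul_eq_zero.mp hR with h' | h'
      · exact_mod_cast h'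
      · exact absurd h' Real.pi_ne_zero
    have := int_aux (n:ℤ) k l hZ
    omega
  · rintro ⟨hm2, hn4⟩
    subst hm2
    refine ⟨Real.pi/2, by positivity, ?_⟩
    rw [formula 2 n hm hn LX LY hLXsymm hLXrow hLYrow u v huv hu hv (Real.pi/2)]
    obtain ⟨q, hq⟩ : ∃ q, n = 4*q+2 := ⟨(n-2)/4, by omega⟩
    have hE1 : Complex.exp (((Real.pi/2*(((2:ℕ):ℝ)+(n:ℝ)) : ℝ) : ℂ) * I) = 1 := by
      have harg : (((Real.pi/2*(((2:ℕ):ℝ)+(n:ℝ)) : ℝ)) : ℂ) * I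
          = (((q:ℤ):ℂ)+1) * (2*(Real.pi:ℂ)*I) := by
        push_cast [hq]; ring
      rw [harg]
      have h' := Complex.exp_int_mul_two_pi_mul_I ((q:ℤ)+1)
      simpa using h'
    have hE2 : Complex.exp (((Real.pi/2*(n:ℝ) : ℝ) : ℂ) * I) = -1 := by
      have harg : (((Real.pi/2*(n:ℝ) : ℝ)) : ℂ) * I
          = ((q:ℤ):ℂ) * (2*(Real.pi:ℂ)*I) + (Real.pi:ℂ)*I := by
        push_cast [hq]; ring
      rw [harg, Complex.exp_add, Complex.exp_int_mul_two_pi_mul_I, Complex.exp_pi_mul_I,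
        one_mul]
    rw [hE1, hE2]
    have hval : ((1/(((2:ℕ):ℝ)+(n:ℝ)) : ℝ) : ℂ)
        + 1 * (((n:ℝ)/(((2:ℕ):ℝ)*(((2:ℕ):ℝ)+(n:ℝ))) : ℝ) : ℂ)
        - (-1) * ((1/((2:ℕ):ℝ) : ℝ) : ℂ) = 1 := by
      have hn2 : ((2:ℂ)+(n:ℂ)) ≠ 0 := by
        have : (0:ℝ) < 2 + (n:ℝ) := by positivity
        exact_mod_cast this.ne'
      push_cast
      field_simp
      ring
    rw [hval]
    simp
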